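/- Let M1 and M2 be matroids on ground sets E1, E2 with E1 ∩ E2 = {e}, where e is neither a loop nor a coloop of M1 or M2. Then M1 = P(M1,M2) − (E2 − e); in particular M1 and M2 are restrictions (submatroids) of the parallel connection P(M1,M2). -/

import Mathlib

open Polynomial

namespace SPPaper

noncomputable section
open Classical

universe u
variable {α : Type u} {V : Type u}

/-- Deletion of a set of elements: `M − X`. -/
def del (M : Matroid α) (X : Set α) : Matroid α := M.restrict (M.E \ X)

/-- Contraction of a set of elements: `M/X = (M✶ − X)✶`. -/
def con (M : Matroid α) (X : Set α) : Matroid α := (del M.dual X).dual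

/-- The rank of a set: the (common) cardinality of maximal independent subsets. -/
def rk (M : Matroid α) (X : Set α) : ℕ :=
  sSup {n | ∃ I, I ⊆ X ∧ M.Indep I ∧ I.ncard = n}

/-- The rank of a matroid. -/
def rank (M : Matroid α) : ℕ := rk M M.E

/-- `e` is a loop of `M` if `{e}` is dependent. -/
def IsLoop (M : Matroid α) (e : α) : Prop := e ∈ M.E ∧ ¬ M.Indep {e}

/-- A matroid is loopless if it has no loops. -/
def Loopless (M : Matroid α) : Prop := ∀ e, ¬ IsLoop M e

/-- `e` is a coloop of `M` if it lies in every basis. -/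
def IsColoop (M : Matroid α) (e : α) : Prop := e ∈ M.E ∧ ∀ B, M.IsBase B → e ∈ B

/-- A circuit of a matroid: a minimal dependent set. -/
def IsCircuit (M : Matroid α) (C : Set α) : Prop := M.Dep C ∧ ∀ D, D ⊂ C → M.Indep D

/-- A matroid is simple if it has no loops and no two-element circuits. -/
def Simple (M : Matroid α) : Prop := Loopless M ∧ ∀ e f : α, ¬ IsCircuit M {e, f}

/-- `h(M;x) = t(M;x,0)` where `t` is the Tutte polynomial:
`t(M;x,y) = ∑_{A ⊆ E} (x−1)^(r(E)−r(A)) (y−1)^(|A|−r(A))`. -/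
def hPoly (M : Matroid α) [Fintype α] : Polynomial ℤ :=
  ∑ A ∈ (Set.toFinite M.E).toFinset.powerset,
    (Polynomial.X - 1) ^ (rank M - rk M (A : Set α)) *
      (-1 : Polynomial ℤ) ^ (A.card - rk M (A : Set α))

/-- The `i`-th entry of the h-vector of the broken circuit complex:
`h(M;x) = ∑_{i=0}^r h_i x^(r−i)`. -/
def hvec (M : Matroid α) [Fintype α] (i : ℕ) : ℤ :=
  if i ≤ rank M then (hPoly M).coeff (rank M - i) else 0

/-- The beta invariant `β(M) = (−1)^(r(E)) ∑_{A ⊆ E} (−1)^(|A|) r(A)`. -/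
def beta (M : Matroid α) [Fintype α] : ℤ :=
  (-1) ^ rank M *
    ∑ A ∈ (Set.toFinite M.E).toFinset.powerset, (-1 : ℤ) ^ A.card * (rk M (A : Set α) : ℤ)

/-- `P` is the direct sum of `M1` and `M2`. -/
def IsDirSumOf (P M1 M2 : Matroid α) : Prop :=
  ∃ h : Disjoint M1.E M2.E, P = Matroid.disjointSum M1 M2 h

/-- A matroid is connected if its ground set is nonempty and it is not the direct sum
of two matroids on nonempty ground sets. -/
def Connected (M : Matroid α) : Prop :=
  M.E.Nonempty ∧ ¬ ∃ M1 M2 : Matroid α, M1.E.Nonempty ∧ M2.E.Nonempty ∧ IsDirSumOf M M1 M2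

/-- `M` is the matroid on ground set `E` whose circuits are exactly the sets satisfying `𝒞`. -/
def HasCircuits (M : Matroid α) (E : Set α) (𝒞 : Set α → Prop) : Prop :=
  M.E = E ∧ ∀ C, IsCircuit M C ↔ 𝒞 C

/-- The circuits of the parallel connection of `M1` and `M2` with basepoint `e`. -/
def PConnCircuit (M1 M2 : Matroid α) (e : α) (C : Set α) : Prop :=
  IsCircuit M1 C ∨ IsCircuit M2 C ∨
    ∃ C1 C2, IsCircuit M1 C1 ∧ IsCircuit M2 C2 ∧ e ∈ C1 ∧ e ∈ C2 ∧ C = (C1 ∪ C2) \ {e}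

/-- The circuits of the series connection of `M1` and `M2` with basepoint `e`. -/
def SConnCircuit (M1 M2 : Matroid α) (e : α) (C : Set α) : Prop :=
  IsCircuit (del M1 {e}) C ∨ IsCircuit (del M2 {e}) C ∨
    ∃ C1 C2, IsCircuit M1 C1 ∧ IsCircuit M2 C2 ∧ e ∈ C1 ∧ e ∈ C2 ∧ C = C1 ∪ C2

/-- `P` is the parallel connection of `M1` and `M2` with respect to the basepoint `e`
(including the degenerate conventions when `e` is a loop or a coloop). -/
def IsParallelConn (P M1 M2 : Matroid α) (e : α) : Prop :=
  if IsLoop M1 e then IsDirSumOf P M1 (con M2 {e})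
  else if IsColoop M1 e then IsDirSumOf P (del M1 {e}) M2
  else if IsLoop M2 e then IsDirSumOf P (con M1 {e}) M2
  else if IsColoop M2 e then IsDirSumOf P M1 (del M2 {e})
  else HasCircuits P (M1.E ∪ M2.E) (PConnCircuit M1 M2 e)

/-- `S` is the series connection of `M1` and `M2` with respect to the basepoint `e`
(including the degenerate conventions when `e` is a loop or a coloop). -/
def IsSeriesConn (S M1 M2 : Matroid α) (e : α) : Prop :=
  if IsLoop M1 e then IsDirSumOf S (con M1 {e}) M2
  else if IsColoop M1 e then IsDirSumOf S M1 (del M2 {e})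
  else if IsLoop M2 e then IsDirSumOf S M1 (con M2 {e})
  else if IsColoop M2 e then IsDirSumOf S (del M1 {e}) M2
  else HasCircuits S (M1.E ∪ M2.E) (SConnCircuit M1 M2 e)

/-- `N` is a two-element circuit. -/
def TwoCircuit (N : Matroid α) : Prop :=
  ∃ e f : α, e ≠ f ∧ N.E = {e, f} ∧ IsCircuit N N.E

/-- `M` is a series extension of `N`: `M = S(N, C₂)` for a 2-circuit `C₂`. -/
def IsSeriesExtOf (M N : Matroid α) : Prop :=
  ∃ (C : Matroid α) (e : α), TwoCircuit C ∧ N.E ∩ C.E = {e} ∧ IsSeriesConn M N C e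

/-- `M` is a parallel extension of `N`: `M = P(N, C₂)` for a 2-circuit `C₂`. -/
def IsParallelExtOf (M N : Matroid α) : Prop :=
  ∃ (C : Matroid α) (e : α), TwoCircuit C ∧ N.E ∩ C.E = {e} ∧ IsParallelConn M N C e

/-- A series-parallel network: a matroid obtainable from a coloop by a sequence of
series and parallel extensions. -/
inductive IsSPNetwork : Matroid α → Prop
  | coloop (M : Matroid α) (e : α) : M.E = {e} → IsColoop M e → IsSPNetwork M
  | series (M N : Matroid α) : IsSPNetwork N → IsSeriesExtOf M N → IsSPNetwork M
  | parallel (M N : Matroid α) : IsSPNetwork N → IsParallelExtOf M N → IsSPNetwork M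

/-- `M` is parallel irreducible at `f`: either `M` is trivial or `M` is not the parallel
connection, with basepoint `f`, of two matroids each having at least two elements. -/
def ParallelIrreducibleAt (M : Matroid α) (f : α) : Prop :=
  M.E.Subsingleton ∨
    ¬ ∃ M1 M2 : Matroid α, M1.E ∩ M2.E = {f} ∧ M1.E.Nontrivial ∧ M2.E.Nontrivial ∧
        IsParallelConn M M1 M2 f

/-- `M` is parallel irreducible. -/
def ParallelIrreducible (M : Matroid α) : Prop := ∀ f ∈ M.E, ParallelIrreducibleAt M f

/-- `M` is the iterated parallel connection of the list `l` of matroids. -/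
inductive IsIterPConn : Matroid α → List (Matroid α) → Prop
  | base (M : Matroid α) : IsIterPConn M [M]
  | step (P M N : Matroid α) (l : List (Matroid α)) (e : α) :
      IsIterPConn P l → P.E ∩ N.E = {e} → IsParallelConn M P N e →
      IsIterPConn M (l ++ [N])

/-- `M` is the cycle matroid of the graph `G` (on the ground set `G.edgeSet`):
a set of edges is independent iff it contains no cycle. -/
def IsCycleMatroid (M : Matroid (Sym2 V)) (G : SimpleGraph V) : Prop :=
  M.E = G.edgeSet ∧ ∀ X ⊆ M.E, (M.Indep X ↔ (SimpleGraph.fromEdgeSet X).IsAcyclic)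

/-- `M` is (isomorphic to) the cycle matroid of the graph `G`. -/
def IsCycleMatroidOf (M : Matroid α) {W : Type} (G : SimpleGraph W) : Prop :=
  ∃ φ : α → Sym2 W, Set.InjOn φ M.E ∧ φ '' M.E = G.edgeSet ∧
    ∀ X ⊆ M.E, (M.Indep X ↔ (SimpleGraph.fromEdgeSet (φ '' X)).IsAcyclic)

/-- A matroid is graphic if it is isomorphic to the cycle matroid of a graph. -/
def IsGraphic (M : Matroid α) : Prop := ∃ (W : Type) (G : SimpleGraph W), IsCycleMatroidOf M G

/-- A nonempty set of elements, each lying in some circuit, such that every circuit of `M`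
containing one of them contains all of them. -/
def SeriesSet (M : Matroid α) (X : Set α) : Prop :=
  X ⊆ M.E ∧ X.Nonempty ∧ (∀ e ∈ X, ∃ C, IsCircuit M C ∧ e ∈ C) ∧
    ∀ C, IsCircuit M C → X ⊆ C ∨ Disjoint X C

/-- A series class: a maximal `SeriesSet`. -/
def SeriesClass (M : Matroid α) (X : Set α) : Prop :=
  SeriesSet M X ∧ ∀ Y, SeriesSet M Y → X ⊆ Y → X = Y

/-- A removable line of a block `G` (with cycle matroid `M`): a line (a nontrivial path
all of whose internal vertices have degree 2) whose removal (edges together with the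
internal vertices) leaves a block. -/
def IsRemovableLine (G : SimpleGraph V) (M : Matroid (Sym2 V)) (X : Set (Sym2 V)) : Prop :=
  ∃ (u v : V) (p : G.Walk u v), p.IsPath ∧ 0 < p.length ∧ X = {e | e ∈ p.edges} ∧
    (∀ w ∈ p.support, w ≠ u → w ≠ v → (G.neighborSet w).ncard = 2) ∧
    ((G.deleteEdges X).induce {w : V | ¬ (w ∈ p.support ∧ w ≠ u ∧ w ≠ v)}).Connected ∧
    Connected (del M X)

/-- One subdivision step: replace an edge `uv` by a path `u-w-v` through a new vertex `w`. -/
def SubdivStep (G G' : SimpleGraph V) : Prop :=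
  ∃ u v w : V, G.Adj u v ∧ w ∉ G.support ∧ w ≠ u ∧ w ≠ v ∧
    G' = SimpleGraph.fromEdgeSet ((G.edgeSet \ {s(u, v)}) ∪ {s(u, w), s(w, v)})

/-- `H` is a subdivision of the complete graph `K₄`. -/
def IsSubdivOfK4 (H : SimpleGraph V) : Prop :=
  ∃ f : Fin 4 ↪ V,
    Relation.ReflTransGen SubdivStep
      (SimpleGraph.fromEdgeSet {s | ∃ i j : Fin 4, i ≠ j ∧ s = s(f i, f j)}) H



lemma exists_circuit_of_dep (M : Matroid α) {D : Set α} (hD : M.Dep D) :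
    ∃ C, C ⊆ D ∧ IsCircuit M C := by
  obtain ⟨I, hI⟩ := M.exists_isBasis' D
  have hIi : M.Indep I := hI.indep
  have hID : I ⊆ D := hI.subset
  have hne : ¬ D ⊆ I := fun h => hD.not_indep (hIi.subset h)
  obtain ⟨x, hxD, hxI⟩ := Set.not_subset.1 hne
  have hxE : x ∈ M.E := hD.subset_ground hxD
  have hxcl : x ∈ M.closure I := by
    rw [hI.closure_eq_closure]
    exact M.inter_ground_subset_closure D ⟨hxD, hxE⟩
  set S : Set α := {y ∈ I | x ∉ M.closure (I \ {y})} with hS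
  have hSI : S ⊆ I := fun y hy => hy.1
  have hSind : M.Indep S := hIi.subset hSI
  have hxS : x ∉ S := fun h => hxI (hSI h)
  have hxclS : x ∈ M.closure S := by
    by_cases hT : (I \ S).Nonempty
    · set Js : Set (Set α) := (fun y => I \ {y}) '' (I \ S) with hJs
      have hJne : Js.Nonempty := hT.image _
      have hsub : ∀ J ∈ Js, J ⊆ I := by
        rintro J ⟨y, hy, rfl⟩; exact Set.diff_subset
      have hinter : ⋂₀ Js = S := by
        ext z
        simp only [hJs, Set.sInter_image, Set.mem_iInter, Set.mem_diff, Set.mem_singleton_iff]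
        constructor
        · intro h
          obtain ⟨y0, hy0⟩ := hT
          have hzI : z ∈ I := (h y0 hy0).1
          refine ⟨hzI, ?_⟩
          by_contra hzcl
          exact (h z ⟨hzI, fun hzS => hzS.2 hzcl⟩).2 rfl
        · rintro ⟨hzI, hzcl⟩ y hy
          exact ⟨hzI, fun hzy => hy.2 (hzy ▸ ⟨hzI, hzcl⟩)⟩
      have := hIi.closure_sInter_eq_biInter_closure_of_forall_subset hJne hsub
      rw [hinter] at this
      rw [this, Set.mem_iInter₂]
      rintro J ⟨y, hy, rfl⟩
      by_contra h
      exact hy.2 ⟨hy.1, h⟩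
    · have : S = I := hSI.antisymm (fun y hy => ⟨hy, by
        push_neg at hT
        by_contra h
        exact (hT.subset ⟨hy, fun hyS => hyS.2 h⟩ : False)⟩)
      rwa [this]
  refine ⟨insert x S, Set.insert_subset hxD (hSI.trans hID), ?_, ?_⟩
  · rw [hSind.insert_dep_iff]; exact ⟨hxclS, hxS⟩
  · intro D' hD'
    obtain ⟨z, hzC, hzD'⟩ := Set.exists_of_ssubset hD'
    have hsub : D' ⊆ insert x S \ {z} := Set.subset_diff_singleton hD'.subset hzD'
    refine Matroid.Indep.subset ?_ hsub
    rcases hzC with rfl | hzS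
    · rw [Set.insert_diff_self_of_notMem hxS]; exact hSind
    · have hxz : x ≠ z := fun h => hxS (h ▸ hzS)
      have : insert x S \ {z} = insert x (S \ {z}) := by
        rw [Set.insert_diff_of_notMem _ (by simpa using hxz)]
      rw [this]
      have hind : M.Indep (S \ {z}) := hSind.subset Set.diff_subset
      rw [hind.insert_indep_iff_of_notMem (fun h => hxS h.1)]
      refine ⟨hxE, fun hcl => hzS.2 ?_⟩
      exact M.closure_subset_closure (Set.diff_subset_diff_left hSI) hcl

lemma indep_iff_no_circuit (M : Matroid α) {I : Set α} (hIE : I ⊆ M.E) :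
    M.Indep I ↔ ∀ C, C ⊆ I → ¬ IsCircuit M C := by
  constructor
  · intro hI C hCI hC
    exact hC.1.not_indep (hI.subset hCI)
  · intro h
    by_contra hI
    obtain ⟨C, hCI, hC⟩ := exists_circuit_of_dep M ⟨hI, hIE⟩
    exact h C hCI hC

lemma pconn_comm {M1 M2 : Matroid α} {e : α} {C : Set α} :
    PConnCircuit M1 M2 e C → PConnCircuit M2 M1 e C := by
  rintro (h | h | ⟨C1, C2, h1, h2, he1, he2, rfl⟩)
  · exact Or.inr (Or.inl h)
  · exact Or.inl h
  · exact Or.inr (Or.inr ⟨C2, C1, h2, h1, he2, he1, by rw [Set.union_comm]⟩)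

lemma key_del {M1 M2 P : Matroid α} {e : α}
    (hE : M1.E ∩ M2.E = {e}) (hl2 : ¬ IsLoop M2 e)
    (hPE : P.E = M1.E ∪ M2.E)
    (hPC : ∀ C, IsCircuit P C ↔ PConnCircuit M1 M2 e C) :
    M1 = del P (M2.E \ {e}) := by
  have hem : e ∈ M1.E ∩ M2.E := by rw [hE]; exact rfl
  have hG : P.E \ (M2.E \ {e}) = M1.E := by
    rw [hPE]
    ext x
    simp only [Set.mem_diff, Set.mem_union, Set.mem_singleton_iff, not_and, not_not]
    constructor
    · rintro ⟨h1 | h2, h3⟩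
      · exact h1
      · exact (h3 h2) ▸ hem.1
    · intro hx
      refine ⟨Or.inl hx, fun hx2 => ?_⟩
      have : x ∈ M1.E ∩ M2.E := ⟨hx, hx2⟩
      rw [hE] at this
      exact this
  -- no circuit of M2 lies inside M1.E
  have hM2circ : ∀ C, IsCircuit M2 C → C ⊆ M1.E → False := by
    intro C hC hCs
    have hCe : C ⊆ {e} := by
      intro x hx
      have : x ∈ M1.E ∩ M2.E := ⟨hCs hx, hC.1.subset_ground hx⟩
      rwa [hE] at this
    obtain ⟨x, hx⟩ := hC.1.nonempty
    have hxe : x = e := hCe hx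
    have hCeq : C = {e} := hCe.antisymm (by rintro y rfl; exact hxe ▸ hx)
    exact hl2 ⟨hem.2, fun h => (hCeq ▸ hC.1).not_indep h⟩
  -- circuits of P inside M1.E are exactly circuits of M1
  have hcirc : ∀ C, C ⊆ M1.E → (IsCircuit P C ↔ IsCircuit M1 C) := by
    intro C hCs
    rw [hPC]
    constructor
    · rintro (h | h | ⟨C1, C2, h1, h2, he1, he2, rfl⟩)
      · exact h
      · exact absurd (hM2circ C h hCs) not_false
      · exfalso
        refine hM2circ C2 h2 ?_
        intro x hx
        by_cases hxe : x = e
        · exact hxe ▸ hem.1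
        · exact hCs ⟨Set.mem_union_right _ hx, hxe⟩
    · exact fun h => Or.inl h
  have hPEsub : M1.E ⊆ P.E := by rw [hPE]; exact Set.subset_union_left
  apply Matroid.ext_indep
  · show M1.E = (P.restrict (P.E \ (M2.E \ {e}))).E
    rw [Matroid.restrict_ground_eq, hG]
  · intro I hIE
    rw [del, Matroid.restrict_indep_iff, hG]
    rw [indep_iff_no_circuit M1 hIE, indep_iff_no_circuit P (hIE.trans hPEsub)]
    constructor
    · intro h
      exact ⟨fun C hCI hC => h C hCI ((hcirc C (hCI.trans hIE)).1 hC), hIE⟩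
    · intro ⟨h, _⟩ C hCI hC
      exact h C hCI ((hcirc C (hCI.trans hIE)).2 hC)

/-- `M1 = P(M1,M2) − (E2 − e)`; in particular `M1` and `M2` are
restrictions of `P(M1,M2)`. -/
theorem stmt6 (M1 M2 P : Matroid α) (e : α)
    (hE : M1.E ∩ M2.E = {e})
    (hl1 : ¬ IsLoop M1 e) (hc1 : ¬ IsColoop M1 e)
    (hl2 : ¬ IsLoop M2 e) (hc2 : ¬ IsColoop M2 e)
    (hP : IsParallelConn P M1 M2 e) :
    M1 = del P (M2.E \ {e}) ∧
    Matroid.IsRestriction M1 P ∧ Matroid.IsRestriction M2 P := by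
  have hem : e ∈ M1.E ∩ M2.E := by rw [hE]; exact rfl
  simp only [IsParallelConn, if_neg hl1, if_neg hc1, if_neg hl2, if_neg hc2] at hP
  obtain ⟨hPE, hPC⟩ := hP
  have h1 : M1 = del P (M2.E \ {e}) := key_del hE hl2 hPE hPC
  have h2 : M2 = del P (M1.E \ {e}) := by
    refine key_del ?_ hl1 ?_ ?_
    · rw [Set.inter_comm]; exact hE
    · rw [hPE, Set.union_comm]
    · intro C
      rw [hPC C]
      exact ⟨pconn_comm, pconn_comm⟩
  refine ⟨h1, ?_, ?_⟩
  · rw [h1]; exact P.restrict_isRestriction _ Set.diff_subset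
  · rw [h2]; exact P.restrict_isRestriction _ Set.diff_subset


end

end SPPaper
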